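/- Fix n, k ∈ ℕ with k ≤ n, and let P = {C_1,…,C_m} be a 1F-CSP instance of arity k over boolean variables x_1,…,x_n. Let H(P) be its FGLSS graph. Then: (i) for every x ∈ {0,1}^n, the set U(x) := {(C, α) : C ∈ P, α a satisfying partial assignment of C, and x does not extend α} is a vertex cover of H(P), and the fraction Val(x) of constraints of P satisfied by x equals 2 − |U(x)|/m; (ii) for every vertex cover U of H(P) there exists x ∈ {0,1}^n with U(x) ⊆ U; consequently, the minimum size of a vertex cover of H(P) equals m·(2 − OPT(P)), where OPT(P) := max_{x ∈ {0,1}^n} Val(x). -/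

import Mathlib

open scoped BigOperators Classical

/-- A constraint of a binary CSP over `n` boolean variables: a support set
`supp ⊆ [n]` together with the set `sat` of satisfying partial assignments. -/
structure BCons (n : ℕ) where
  supp : Finset (Fin n)
  sat : Finset ({i // i ∈ supp} → Bool)

/-- An assignment `x ∈ {0,1}^n` satisfies the constraint `C` iff its restriction
to the support of `C` is an accepting configuration. -/
def BCons.SatBy {n : ℕ} (C : BCons n) (x : Fin n → Bool) : Prop :=
  (fun i : {i // i ∈ C.supp} => x i.1) ∈ C.sat

/-- The vertices of the FGLSS graph of the instance `C`: pairs of a constraint and one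
of its satisfying partial assignments. -/
abbrev FGLSSVert {n m : ℕ} (C : Fin m → BCons n) : Type :=
  (i : Fin m) × {α : {j // j ∈ (C i).supp} → Bool // α ∈ (C i).sat}

/-- Two vertices of the FGLSS graph are adjacent iff their partial assignments are
incompatible: some common variable receives different values. -/
def FGLSSIncomp {n m : ℕ} (C : Fin m → BCons n) (p p' : FGLSSVert C) : Prop :=
  ∃ (v : Fin n) (h : v ∈ (C p.1).supp) (h' : v ∈ (C p'.1).supp),
    p.2.1 ⟨v, h⟩ ≠ p'.2.1 ⟨v, h'⟩

/-- The FGLSS graph of the instance `C`. -/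
def FGLSSGraph {n m : ℕ} (C : Fin m → BCons n) : SimpleGraph (FGLSSVert C) where
  Adj := FGLSSIncomp C
  symm := by
    constructor
    rintro p p' ⟨v, h, h', hne⟩
    exact ⟨v, h', h, fun e => hne e.symm⟩
  loopless := by
    constructor
    rintro p ⟨v, h, h', hne⟩
    exact hne rfl

/-- `U` is a vertex cover of the FGLSS graph. -/
def FGLSSIsVC {n m : ℕ} (C : Fin m → BCons n) (U : Finset (FGLSSVert C)) : Prop :=
  ∀ p p' : FGLSSVert C, (FGLSSGraph C).Adj p p' → p ∈ U ∨ p' ∈ U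

/-- `U(x)`: the set of vertices `(C, α)` whose partial assignment `α` is not extended
by the total assignment `x`. -/
noncomputable def FGLSScoverOf {n m : ℕ} (C : Fin m → BCons n) (x : Fin n → Bool) :
    Finset (FGLSSVert C) :=
  Finset.univ.filter fun p => ¬ ∀ i : {j // j ∈ (C p.1).supp}, x i.1 = p.2.1 i

/-- `OPT(P)`: the maximum over assignments of the fraction of satisfied constraints. -/
noncomputable def FGLSSopt {n m : ℕ} [NeZero m] (C : Fin m → BCons n) : ℝ :=
  Finset.univ.sup' Finset.univ_nonempty
    (fun x : Fin n → Bool =>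
      ((Finset.univ.filter fun i => (C i).SatBy x).card : ℝ) / m)

/-- FGLSS reduction from a `1F-CSP` instance `P` (with `m ≥ 1` constraints of arity
`k ≤ n`, each with exactly two accepting configurations) to vertex cover:
(i) for every assignment `x`, `U(x)` is a vertex cover of the FGLSS graph and
`Val(x) = 2 - |U(x)|/m`; (ii) every vertex cover contains some `U(x)`; consequently,
the minimum size of a vertex cover equals `m·(2 - OPT(P))`. -/
-- aux: cardinality lemma
lemma fglss_card_aux {n m : ℕ} (C : Fin m → BCons n) (h1f : ∀ i, (C i).sat.card = 2)
    (x : Fin n → Bool) :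
    (FGLSScoverOf C x).card + (Finset.univ.filter fun i => (C i).SatBy x).card = 2 * m := by
  have htot : (Finset.univ.filter fun p : FGLSSVert C =>
        ¬ ∀ i : {j // j ∈ (C p.1).supp}, x i.1 = p.2.1 i).card +
      (Finset.univ.filter fun p : FGLSSVert C =>
        ∀ i : {j // j ∈ (C p.1).supp}, x i.1 = p.2.1 i).card =
      Fintype.card (FGLSSVert C) := by
    rw [add_comm]
    rw [Finset.card_filter_add_card_filter_not]
    exact Finset.card_univ
  have hcard : Fintype.card (FGLSSVert C) = 2 * m := by
    rw [Fintype.card_sigma]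
    simp [Fintype.card_coe, h1f, Finset.card_univ, mul_comm]
  have hbij : (Finset.univ.filter fun i => (C i).SatBy x).card =
      (Finset.univ.filter fun p : FGLSSVert C =>
        ∀ i : {j // j ∈ (C p.1).supp}, x i.1 = p.2.1 i).card := by
    refine Finset.card_bij (fun i hi => (⟨i, ⟨fun j => x j.1,
      (Finset.mem_filter.mp hi).2⟩⟩ : FGLSSVert C)) ?_ ?_ ?_
    · intro i hi
      simp
    · intro i hi i' hi' h
      exact congrArg Sigma.fst h
    · intro p hp
      have hext := (Finset.mem_filter.mp hp).2
      refine ⟨p.1, ?_, ?_⟩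
      · simp only [Finset.mem_filter, Finset.mem_univ, true_and]
        show (fun j : {j // j ∈ (C p.1).supp} => x j.1) ∈ (C p.1).sat
        have : (fun j : {j // j ∈ (C p.1).supp} => x j.1) = p.2.1 := funext hext
        rw [this]; exact p.2.2
      · have : (fun j : {j // j ∈ (C p.1).supp} => x j.1) = p.2.1 := funext hext
        exact Sigma.ext rfl (by simp [Subtype.ext_iff, this])
  have hdef : FGLSScoverOf C x = Finset.univ.filter fun p : FGLSSVert C =>
      ¬ ∀ i : {j // j ∈ (C p.1).supp}, x i.1 = p.2.1 i := rfl
  rw [hdef, hbij, htot, hcard]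

lemma fglss_vc_aux {n m : ℕ} (C : Fin m → BCons n) (x : Fin n → Bool) :
    FGLSSIsVC C (FGLSScoverOf C x) := by
  rintro p p' ⟨v, h, h', hne⟩
  by_contra hcon
  push_neg at hcon
  obtain ⟨hp, hp'⟩ := hcon
  simp only [FGLSScoverOf, Finset.mem_filter, Finset.mem_univ, true_and, not_not] at hp hp'
  exact hne ((hp ⟨v, h⟩).symm.trans (hp' ⟨v, h'⟩))

lemma fglss_exists_sub {n m : ℕ} (C : Fin m → BCons n) (U : Finset (FGLSSVert C))
    (hU : FGLSSIsVC C U) : ∃ x, FGLSScoverOf C x ⊆ U := by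
  refine ⟨fun v => decide (∃ p : FGLSSVert C, p ∉ U ∧
    ∃ h : v ∈ (C p.1).supp, p.2.1 ⟨v, h⟩ = true), fun p hp => ?_⟩
  by_contra hpU
  simp only [FGLSScoverOf, Finset.mem_filter, Finset.mem_univ, true_and] at hp
  apply hp
  intro i
  cases hb : p.2.1 i with
  | true =>
    simp only [decide_eq_true_eq]
    exact ⟨p, hpU, i.2, hb⟩
  | false =>
    simp only [decide_eq_false_iff_not]
    rintro ⟨q, hqU, hq, hqt⟩
    have hadj : FGLSSIncomp C p q := ⟨i.1, i.2, hq, by rw [Subtype.coe_eta, hb, hqt]; simp⟩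
    rcases hU p q hadj with h | h
    · exact hpU h
    · exact hqU h


theorem fglss_reduction (n m k : ℕ) [NeZero m] (hkn : k ≤ n) (C : Fin m → BCons n)
    (harity : ∀ i, (C i).supp.card = k) (h1f : ∀ i, (C i).sat.card = 2) :
    (∀ x : Fin n → Bool,
      FGLSSIsVC C (FGLSScoverOf C x) ∧
      ((Finset.univ.filter fun i => (C i).SatBy x).card : ℝ) / m =
        2 - ((FGLSScoverOf C x).card : ℝ) / m) ∧
    (∀ U : Finset (FGLSSVert C), FGLSSIsVC C U → ∃ x, FGLSScoverOf C x ⊆ U) ∧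
    (∃ U : Finset (FGLSSVert C), FGLSSIsVC C U ∧
      (U.card : ℝ) = m * (2 - FGLSSopt C) ∧
      ∀ U' : Finset (FGLSSVert C), FGLSSIsVC C U' → U.card ≤ U'.card) := by
  have hm : (m : ℝ) ≠ 0 := Nat.cast_ne_zero.mpr (NeZero.ne m)
  have hmpos : (0 : ℝ) < m := by positivity
  have keyR : ∀ x : Fin n → Bool,
      ((FGLSScoverOf C x).card : ℝ) + ((Finset.univ.filter fun i => (C i).SatBy x).card : ℝ)
        = 2 * m := by
    intro x
    have h := fglss_card_aux C h1f x
    exact_mod_cast congrArg (Nat.cast : ℕ → ℝ) h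
  have key : ∀ x : Fin n → Bool,
      ((Finset.univ.filter fun i => (C i).SatBy x).card : ℝ) / m =
        2 - ((FGLSScoverOf C x).card : ℝ) / m := by
    intro x
    have h := keyR x
    field_simp
    linarith
  refine ⟨fun x => ⟨fglss_vc_aux C x, key x⟩, fglss_exists_sub C, ?_⟩
  obtain ⟨x₀, -, hx₀⟩ := Finset.exists_mem_eq_sup' (Finset.univ_nonempty)
    (fun x : Fin n → Bool =>
      ((Finset.univ.filter fun i => (C i).SatBy x).card : ℝ) / m)
  have hopt : FGLSSopt C =
      ((Finset.univ.filter fun i => (C i).SatBy x₀).card : ℝ) / m := hx₀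
  refine ⟨FGLSScoverOf C x₀, fglss_vc_aux C x₀, ?_, ?_⟩
  · have h := keyR x₀
    rw [hopt]
    field_simp
    linarith
  · intro U' hU'
    obtain ⟨x, hx⟩ := fglss_exists_sub C U' hU'
    have h1 : (FGLSScoverOf C x).card ≤ U'.card := Finset.card_le_card hx
    have h2 : (Finset.univ.filter fun i => (C i).SatBy x).card ≤
        (Finset.univ.filter fun i => (C i).SatBy x₀).card := by
      have hle : ((Finset.univ.filter fun i => (C i).SatBy x).card : ℝ) / m ≤
          ((Finset.univ.filter fun i => (C i).SatBy x₀).card : ℝ) / m := by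
        rw [← hopt]
        unfold FGLSSopt
        exact Finset.le_sup' (fun y : Fin n → Bool =>
          ((Finset.univ.filter fun i => (C i).SatBy y).card : ℝ) / m) (Finset.mem_univ x)
      have := (div_le_div_iff_of_pos_right hmpos).mp hle
      exact_mod_cast this
    have a := fglss_card_aux C h1f x
    have b := fglss_card_aux C h1f x₀
    omega
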